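/- Let G be a finite group with a unique (normal) Sylow ℓ-subgroup S, and let H ≤ G be any subgroup. Then for every σ ∈ G of order a power of ℓ with σ^ℓ ∈ H and σ ∉ H, there exists a subgroup G' of G with H ≤ G', σ ∈ G', and the G'-conjugacy class of σ disjoint from H; i.e., the pair G/H is strongly ℓ-divisible. -/

import Mathlib

open Subgroup

/-- If a finite group `G` has a normal (hence unique) Sylow `ℓ`-subgroup, then
for every subgroup `H ≤ G` and every `σ ∉ H` of `ℓ`-power order with
`σ^ℓ ∈ H`, there is a subgroup `G'` with `H ≤ G'`, `σ ∈ G'`, and the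
`G'`-conjugacy class of `σ` disjoint from `H`; i.e. `G/H` is strongly
`ℓ`-divisible. -/
theorem stmt4 {G : Type*} [Group G] [Finite G] (ℓ : ℕ) [Fact ℓ.Prime]
    (S : Sylow ℓ G) (hS : (S : Subgroup G).Normal) (H : Subgroup G) :
    ∀ σ : G, σ ∉ H → σ ^ ℓ ∈ H → (∃ m : ℕ, orderOf σ = ℓ ^ m) →
      ∃ G' : Subgroup G, H ≤ G' ∧ σ ∈ G' ∧ ∀ π ∈ G', π * σ * π⁻¹ ∉ H := by
  intro σ hσH _ hord
  obtain ⟨m, hm⟩ := hord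
  -- σ lies in the (unique, normal) Sylow subgroup S
  have hσS : σ ∈ (S : Subgroup G) := by
    have hP : IsPGroup ℓ (zpowers σ) :=
      IsPGroup.of_card ((Nat.card_zpowers σ).trans hm)
    obtain ⟨Q, hQ⟩ := hP.exists_le_sylow
    haveI := Sylow.unique_of_normal S hS
    have : Q = S := Subsingleton.elim _ _
    exact this ▸ hQ (mem_zpowers σ)
  -- iterated normalizer chain inside S, starting at H ⊓ S
  let C : ℕ → Subgroup G := fun n => n.rec (H ⊓ S) (fun _ K => normalizer (K : Set G) ⊓ S)
  have hC0 : C 0 = H ⊓ (S : Subgroup G) := rfl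
  have hCs : ∀ n, C (n + 1) = normalizer (SetLike.coe (C n)) ⊓ (S : Subgroup G) := fun _ => rfl
  have hCS : ∀ n, C n ≤ (S : Subgroup G) := by
    intro n; cases n <;> exact inf_le_right
  have hstep : ∀ n, C n ≤ C (n + 1) := fun n => by
    rw [hCs n]; exact le_inf le_normalizer (hCS n)
  have hmono : Monotone C := monotone_nat_of_le_succ hstep
  have hStop : ∀ g : G, g ∈ normalizer ((S : Subgroup G) : Set G) := by
    intro g; rw [normalizer_eq_top_iff.mpr hS]; trivial
  have hinf : ∀ (A B : Subgroup G) (h : G), h ∈ normalizer (A : Set G) → h ∈ normalizer (B : Set G) →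
      h ∈ normalizer ((A ⊓ B : Subgroup G) : Set G) := by
    intro A B h hA hB
    rw [mem_normalizer_iff] at *
    intro g
    simp only [mem_inf, hA g, hB g]
  -- H normalizes each term of the chain
  have hnorm : ∀ n, H ≤ normalizer (SetLike.coe (C n)) := by
    intro n
    induction n with
    | zero =>
        intro h hh
        rw [hC0]
        exact hinf _ _ h (le_normalizer hh) (hStop h)
    | succ n ih =>
        intro h hh
        rw [hCs n]
        exact hinf _ _ h (le_normalizer (ih hh)) (hStop h)
  -- strict growth while σ is not yet in the chain
  have hgrow : ∀ n, σ ∉ C n → C n < C (n + 1) := by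
    intro n hn
    have hne : (C n).subgroupOf S ≠ ⊤ := by
      intro htop
      have : (S : Subgroup G) ≤ C n := (subgroupOf_eq_top).mp htop
      exact hn (this hσS)
    haveI : Fact (Nat.Prime ℓ) := inferInstance
    haveI : Group.IsNilpotent ↥(S : Subgroup G) := S.isPGroup'.isNilpotent
    have hNC : NormalizerCondition ↥(S : Subgroup G) :=
      normalizerCondition_of_isNilpotent
    have hlt : (C n).subgroupOf S < normalizer (((C n).subgroupOf S : Subgroup ↥(S : Subgroup G)) : Set ↥(S : Subgroup G)) :=
      hNC _ (lt_top_iff_ne_top.mpr hne)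
    obtain ⟨x, hx1, hx2⟩ := SetLike.exists_of_lt hlt
    have hxCn : (x : G) ∉ C n := fun hc => hx2 ((mem_subgroupOf).mpr hc)
    have hxC : (x : G) ∈ C (n + 1) := by
      rw [hCs n]
      refine ⟨?_, x.2⟩
      show (x : G) ∈ normalizer (SetLike.coe (C n))
      rw [mem_normalizer_iff]
      intro g
      rw [mem_normalizer_iff] at hx1
      constructor
      · intro hg
        have hgS : g ∈ (S : Subgroup G) := hCS n hg
        have := (hx1 ⟨g, hgS⟩).mp ((mem_subgroupOf).mpr hg)
        exact (mem_subgroupOf).mp this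
      · intro hg
        have hgS : g ∈ (S : Subgroup G) := by
          have h1 : (x : G) * g * (x : G)⁻¹ ∈ (S : Subgroup G) := hCS n hg
          have := mul_mem (mul_mem (inv_mem x.2) h1) x.2
          simpa [mul_assoc] using this
        have := (hx1 ⟨g, hgS⟩).mpr ((mem_subgroupOf).mpr hg)
        exact (mem_subgroupOf).mp this
    exact lt_of_le_of_ne (hstep n) fun heq => hxCn (heq ▸ hxC)
  -- the chain eventually captures σ
  classical
  have hex : ∃ n, σ ∈ C n := by
    by_contra hcon
    push_neg at hcon
    have hSM : StrictMono C := strictMono_nat_of_lt_succ fun n => hgrow n (hcon n)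
    haveI : Finite (Subgroup G) :=
      Finite.of_injective (fun K : Subgroup G => (K : Set G)) SetLike.coe_injective
    obtain ⟨a, b, hab, heq⟩ := Finite.exists_ne_map_eq_of_infinite C
    exact hab (hSM.injective heq)
  have hmin : ∃ k, σ ∈ C k ∧ ∀ j < k, σ ∉ C j := by
    obtain ⟨n, hn⟩ := hex
    induction n using Nat.strong_induction_on with
    | _ n ih =>
      rcases Classical.em (∀ j < n, σ ∉ C j) with hall | hall
      · exact ⟨n, hn, hall⟩
      · push_neg at hall
        obtain ⟨j, hj1, hj2⟩ := hall
        exact ih j hj1 hj2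
  obtain ⟨k, hk, hkmin⟩ := hmin
  have hk0 : k ≠ 0 := by
    intro h0
    have : σ ∈ C 0 := by rw [← h0]; exact hk
    rw [hC0] at this
    exact hσH this.1
  obtain ⟨j, hj⟩ : ∃ j, k = j + 1 := ⟨k - 1, (Nat.succ_pred_eq_of_ne_zero hk0).symm⟩
  have hσj : σ ∉ C j := hkmin j (by omega)
  refine ⟨H ⊔ C (j + 1), le_sup_left, (le_sup_right : C (j+1) ≤ _) (hj ▸ hk), ?_⟩
  have hle : H ⊔ C (j + 1) ≤ normalizer (SetLike.coe (C j)) := by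
    refine sup_le (hnorm j) ?_
    rw [hCs j]; exact inf_le_left
  intro π hπ hcon
  have hπN : π ∈ normalizer (SetLike.coe (C j)) := hle hπ
  have h1 : π * σ * π⁻¹ ∈ (S : Subgroup G) := hS.conj_mem σ hσS π
  have h2 : π * σ * π⁻¹ ∈ C j := hmono (Nat.zero_le j) (hC0 ▸ ⟨hcon, h1⟩)
  exact hσj ((mem_normalizer_iff.mp hπN σ).mpr h2)
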